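/- arXiv:1903.04133 — 5 statements merged into one kernel-verified Lean document; each statement's English description precedes it below -/
import Mathlib

section
/- Let E be a real normed space, M ≥ 0, and let h, δ, q, Ψ : ℕ → ℝ and d : ℕ → E be sequences (indexed from 1) such that: (i) h(k+1) ≥ h(k) + δ(k) + q(k) for all k ≥ 1; (ii) 0 ≤ h(k) ≤ M for all k ≥ 1; (iii) Ψ(k) > 0 for all k; (iv) there exists a strictly increasing function m : ℕ → ℕ with m(0) = 0 such that for every j, Σ_{k = m(j)+1}^{m(j+1)} Ψ(k)·‖d(k)‖² ≤ Σ_{k = m(j)+1}^{m(j+1)} ( δ(k) + q(k) ). Then for every n ≥ 1, Σ_{k=1}^{n} Ψ(k)·‖d(k)‖² ≤ M. (This is the bound (21), Σ_k Ψ_{i,k}‖d_{i,k}‖² ≤ |B̄_i|·H_UB, established in the proof of Theorem 1 of the paper.) -/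
open Finset

/-- The bound (21) in the proof of Theorem 1 of the paper:
`Σ_k Ψ_{i,k} ‖d_{i,k}‖² ≤ |B̄_i| · H_UB`. -/
theorem partial_sum_bound {E : Type*} [NormedAddCommGroup E]
    (M : ℝ) (hM : 0 ≤ M) (h δ q Ψ : ℕ → ℝ) (d : ℕ → E)
    (hstep : ∀ k ≥ 1, h (k + 1) ≥ h k + δ k + q k)
    (hbd : ∀ k ≥ 1, 0 ≤ h k ∧ h k ≤ M)
    (hΨ : ∀ k, 0 < Ψ k)
    (m : ℕ → ℕ) (hm : StrictMono m) (hm0 : m 0 = 0)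
    (hwin : ∀ j : ℕ, ∑ k ∈ Finset.Icc (m j + 1) (m (j + 1)), Ψ k * ‖d k‖ ^ 2
        ≤ ∑ k ∈ Finset.Icc (m j + 1) (m (j + 1)), (δ k + q k)) :
    ∀ n ≥ 1, ∑ k ∈ Finset.Icc 1 n, Ψ k * ‖d k‖ ^ 2 ≤ M := by
  -- telescoping: partial sums of δ+q are bounded by h (N+1) - h 1
  have tele : ∀ N : ℕ, ∑ k ∈ Finset.Icc 1 N, (δ k + q k) ≤ h (N + 1) - h 1 := by
    intro N
    induction N with
    | zero => simp
    | succ N ih =>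
        rw [Finset.sum_Icc_succ_top (Nat.le_add_left 1 N)]
        have := hstep (N + 1) (Nat.le_add_left 1 N)
        linarith
  -- windowed sums: Σ_{1..m J} Ψ‖d‖² ≤ Σ_{1..m J} (δ+q)
  have win : ∀ J : ℕ, ∑ k ∈ Finset.Icc 1 (m J), Ψ k * ‖d k‖ ^ 2
      ≤ ∑ k ∈ Finset.Icc 1 (m J), (δ k + q k) := by
    intro J
    induction J with
    | zero => simp [hm0]
    | succ J ih =>
        have hle : m J ≤ m (J + 1) := (hm (Nat.lt_succ_self J)).le
        have e1 : ∀ f : ℕ → ℝ, ∑ k ∈ Finset.Icc 1 (m (J + 1)), f k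
            = ∑ k ∈ Finset.Icc 1 (m J), f k
              + ∑ k ∈ Finset.Icc (m J + 1) (m (J + 1)), f k := by
          intro f
          have := Finset.sum_Ioc_consecutive f (Nat.zero_le (m J)) hle
          simpa [← Finset.Icc_add_one_left_eq_Ioc] using this.symm
        rw [e1, e1]
        exact add_le_add ih (hwin J)
  intro n hn
  have hmn : n ≤ m n := hm.le_apply
  have hsub : Finset.Icc 1 n ⊆ Finset.Icc 1 (m n) :=
    Finset.Icc_subset_Icc_right hmn
  have step1 : ∑ k ∈ Finset.Icc 1 n, Ψ k * ‖d k‖ ^ 2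
      ≤ ∑ k ∈ Finset.Icc 1 (m n), Ψ k * ‖d k‖ ^ 2 := by
    apply Finset.sum_le_sum_of_subset_of_nonneg hsub
    intro k _ _
    exact mul_nonneg (hΨ k).le (by positivity)
  have h1 := hbd 1 le_rfl
  have h2 := hbd (m n + 1) (Nat.le_add_left 1 (m n))
  calc ∑ k ∈ Finset.Icc 1 n, Ψ k * ‖d k‖ ^ 2
      ≤ ∑ k ∈ Finset.Icc 1 (m n), Ψ k * ‖d k‖ ^ 2 := step1
    _ ≤ ∑ k ∈ Finset.Icc 1 (m n), (δ k + q k) := win n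
    _ ≤ h (m n + 1) - h 1 := tele (m n)
    _ ≤ M := by linarith [h1.1, h2.2]
end

section
/- Let E be a real normed space, M ≥ 0, ψ > 0, and let h, δ, q, Ψ : ℕ → ℝ and d : ℕ → E be sequences (indexed from 1) such that: (i) h(k+1) ≥ h(k) + δ(k) + q(k) for all k ≥ 1; (ii) 0 ≤ h(k) ≤ M for all k ≥ 1; (iii) Ψ(k) ≥ ψ for all k; (iv) there exists a strictly increasing function m : ℕ → ℕ with m(0) = 0 such that for every j, 0 ≤ Σ_{k = m(j)+1}^{m(j+1)} Ψ(k)·‖d(k)‖² ≤ Σ_{k = m(j)+1}^{m(j+1)} ( δ(k) + q(k) ). Then lim_{k → ∞} d(k) = 0. (Theorem 1 of the paper: under Assumptions 1–4, the optimal variable step size (13) guarantees the convergence criterion lim_{k→∞} d_{i,k} = 0 for every agent i whose extended neighborhood is entirely in normal mode.) -/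
open Finset Filter

/-- Theorem 1 of the paper: under Assumptions 1–4 the optimal variable step
size guarantees `lim_{k→∞} d_{i,k} = 0`. -/
theorem gradient_converges_to_zero {E : Type*} [NormedAddCommGroup E]
    (M : ℝ) (hM : 0 ≤ M) (ψ : ℝ) (hψ : 0 < ψ)
    (h δ q Ψ : ℕ → ℝ) (d : ℕ → E)
    (hstep : ∀ k ≥ 1, h (k + 1) ≥ h k + δ k + q k)
    (hbd : ∀ k ≥ 1, 0 ≤ h k ∧ h k ≤ M)
    (hΨ : ∀ k, ψ ≤ Ψ k)
    (m : ℕ → ℕ) (hm : StrictMono m) (hm0 : m 0 = 0)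
    (hwin : ∀ j : ℕ,
      0 ≤ ∑ k ∈ Finset.Icc (m j + 1) (m (j + 1)), Ψ k * ‖d k‖ ^ 2 ∧
      ∑ k ∈ Finset.Icc (m j + 1) (m (j + 1)), Ψ k * ‖d k‖ ^ 2
        ≤ ∑ k ∈ Finset.Icc (m j + 1) (m (j + 1)), (δ k + q k)) :
    Tendsto d atTop (nhds 0) := by
  set a : ℕ → ℝ := fun k => Ψ k * ‖d k‖ ^ 2 with ha
  have ha0 : ∀ k, 0 ≤ a k := fun k =>
    mul_nonneg (le_trans hψ.le (hΨ k)) (sq_nonneg _)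
  -- telescoping bound for δ+q over an interval
  have tele : ∀ b : ℕ, ∀ c : ℕ, c ≤ b →
      ∑ k ∈ Finset.Ioc c b, (δ k + q k) ≤ h (b + 1) - h (c + 1) := by
    intro b
    induction b with
    | zero =>
      intro c hc
      interval_cases c
      simp
    | succ n ih =>
      intro c hc
      rcases Nat.lt_or_ge c (n + 1) with hlt | hge
      · have hc' : c ≤ n := Nat.lt_succ_iff.mp hlt
        rw [Finset.sum_Ioc_succ_top hc']
        have h1 := ih c hc'
        have h2 := hstep (n + 1) (Nat.succ_le_succ (Nat.zero_le n))
        linarith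
      · have : c = n + 1 := le_antisymm hc hge
        subst this
        simp
    -- partial sums up to m J are bounded
  have key : ∀ J : ℕ, ∑ k ∈ Finset.Ioc 0 (m J), a k ≤ h (m J + 1) - h 1 := by
    intro J
    induction J with
    | zero => simp [hm0]
    | succ J ih =>
      have hmle : m J ≤ m (J + 1) := (hm (Nat.lt_succ_self J)).le
      rw [← Finset.sum_Ioc_consecutive _ (Nat.zero_le (m J)) hmle]
      have hw := hwin J
      rw [Finset.Icc_add_one_left_eq_Ioc] at hw
      have ht := tele (m (J + 1)) (m J) hmle
      have := le_trans hw.2 ht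
      simp only [ha] at this ⊢
      linarith
  have bdd : ∀ n : ℕ, ∑ i ∈ Finset.range n, a (i + 1) ≤ M := by
    intro n
    have h1 : ∑ i ∈ Finset.range n, a (i + 1) = ∑ k ∈ Finset.Ioc 0 n, a k := by
      rw [← Finset.Icc_add_one_left_eq_Ioc, ← Finset.Ico_add_one_right_eq_Icc, Finset.sum_Ico_eq_sum_range]
      simp [add_comm]
    have h2 : ∑ k ∈ Finset.Ioc 0 n, a k ≤ ∑ k ∈ Finset.Ioc 0 (m n), a k :=
      Finset.sum_le_sum_of_subset_of_nonneg
        (Finset.Ioc_subset_Ioc_right (hm.le_apply)) (fun k _ _ => ha0 k)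
    have h3 := key n
    have h4 := (hbd (m n + 1) (Nat.succ_le_succ (Nat.zero_le _))).2
    have h5 := (hbd 1 le_rfl).1
    linarith
  have hsum : Summable (fun i => a (i + 1)) :=
    summable_of_sum_range_le (fun i => ha0 _) bdd
  have hten : Tendsto (fun i => a (i + 1)) atTop (nhds 0) := hsum.tendsto_atTop_zero
  have hsq : Tendsto (fun i => ‖d (i + 1)‖ ^ 2) atTop (nhds 0) := by
    apply squeeze_zero (fun i => sq_nonneg _) (g := fun i => a (i + 1) / ψ)
    · intro i
      rw [le_div_iff₀ hψ]
      calc ‖d (i + 1)‖ ^ 2 * ψ = ψ * ‖d (i + 1)‖ ^ 2 := mul_comm _ _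
        _ ≤ Ψ (i + 1) * ‖d (i + 1)‖ ^ 2 :=
          mul_le_mul_of_nonneg_right (hΨ _) (sq_nonneg _)
    · simpa using hten.div_const ψ
  have hnorm : Tendsto (fun i => ‖d (i + 1)‖) atTop (nhds 0) := by
    have := hsq.sqrt
    simpa [Real.sqrt_sq (norm_nonneg _)] using this
  have : Tendsto (fun i => d (i + 1)) atTop (nhds 0) :=
    tendsto_zero_iff_norm_tendsto_zero.mpr hnorm
  exact (tendsto_add_atTop_iff_nat 1).mp this
end

section
/- Let E be a real normed space, M ≥ 0, ψ > 0. Let σ : ℕ → Prop be a decidable predicate (σ(k) meaning the agent is in boosting mode at step k), let d, d̂ : ℕ → E be two sequences, and define the effective update direction e(k) = d̂(k) if σ(k) holds and e(k) = d(k) otherwise. Let h, δ, q, Ψ : ℕ → ℝ satisfy: (i) h(k+1) ≥ h(k) + δ(k) + q(k) for all k ≥ 1; (ii) 0 ≤ h(k) ≤ M for all k ≥ 1; (iii) Ψ(k) ≥ ψ for all k; (iv) there exists a strictly increasing function m : ℕ → ℕ with m(0) = 0 such that for every j, 0 ≤ Σ_{k = m(j)+1}^{m(j+1)} Ψ(k)·‖e(k)‖²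 ≤ Σ_{k = m(j)+1}^{m(j+1)} ( δ(k) + q(k) ). Then Σ_{k=1}^{n} Ψ(k)·‖e(k)‖² ≤ M for every n, and lim_{k → ∞} e(k) = 0; in particular d(k) → 0 along the steps where σ(k) fails (normal mode) and d̂(k) → 0 along the steps where σ(k) holds (boosting mode). (Theorem 2 of the paper, via the bound (22): Σ_k Ψ_{i,k}[1_{i∈N}‖d_{i,k}‖² + 1_{i∈B}‖d̂_{i,k}‖²] ≤ |B̄_i|·H_UB.) -/
open Finset Filter

/-- Theorem 2 of the paper, via the bound (22): the effective (normal or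
boosted) update direction satisfies the partial-sum bound and converges to
zero; in particular the normal gradient vanishes along normal-mode steps and
the boosted gradient vanishes along boosting-mode steps. -/
theorem boosted_gradient_converges_to_zero {E : Type*} [NormedAddCommGroup E]
    (M : ℝ) (hM : 0 ≤ M) (ψ : ℝ) (hψ : 0 < ψ)
    (σ : ℕ → Prop) [DecidablePred σ] (d dhat : ℕ → E)
    (e : ℕ → E) (he : ∀ k, e k = if σ k then dhat k else d k)
    (h δ q Ψ : ℕ → ℝ)
    (hstep : ∀ k ≥ 1, h (k + 1) ≥ h k + δ k + q k)
    (hbd : ∀ k ≥ 1, 0 ≤ h k ∧ h k ≤ M)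
    (hΨ : ∀ k, ψ ≤ Ψ k)
    (m : ℕ → ℕ) (hm : StrictMono m) (hm0 : m 0 = 0)
    (hwin : ∀ j : ℕ,
      0 ≤ ∑ k ∈ Finset.Icc (m j + 1) (m (j + 1)), Ψ k * ‖e k‖ ^ 2 ∧
      ∑ k ∈ Finset.Icc (m j + 1) (m (j + 1)), Ψ k * ‖e k‖ ^ 2
        ≤ ∑ k ∈ Finset.Icc (m j + 1) (m (j + 1)), (δ k + q k)) :
    (∀ n : ℕ, ∑ k ∈ Finset.Icc 1 n, Ψ k * ‖e k‖ ^ 2 ≤ M) ∧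
    Tendsto e atTop (nhds 0) ∧
    (∀ ε > (0 : ℝ), ∃ N : ℕ, ∀ k ≥ N,
      (¬ σ k → ‖d k‖ < ε) ∧ (σ k → ‖dhat k‖ < ε)) := by
  set f : ℕ → ℝ := fun k => Ψ k * ‖e k‖ ^ 2 with hf
  have hf0 : ∀ k, 0 ≤ f k := fun k =>
    mul_nonneg (le_trans hψ.le (hΨ k)) (sq_nonneg _)
  -- telescoping bound on ∑ (δ + q)
  have hIoc : ∀ a n : ℕ, Finset.Ioc a n = Finset.Icc (a + 1) n := by
    intro a n; ext x; simp
  have hdq : ∀ n : ℕ, ∑ k ∈ Finset.Icc 1 n, (δ k + q k) ≤ M := by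
    intro n
    have key : ∀ n : ℕ, h 1 + ∑ k ∈ Finset.Icc 1 n, (δ k + q k) ≤ h (n + 1) := by
      intro n
      induction n with
      | zero => simp
      | succ n ih =>
        rcases Nat.eq_zero_or_pos n with rfl | hn
        · have := hstep 1 le_rfl; simp; linarith
        · rw [Finset.sum_Icc_succ_top (by omega)]
          have := hstep (n + 1) (by omega)
          linarith
    rcases Nat.eq_zero_or_pos n with rfl | hn
    · simpa using hM
    · have h1 := (hbd 1 le_rfl).1
      have h2 := (hbd (n + 1) (by omega)).2
      have := key n
      linarith
  -- sums up to m j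
  have hmj : ∀ j : ℕ, ∑ k ∈ Finset.Icc 1 (m j), f k ≤
      ∑ k ∈ Finset.Icc 1 (m j), (δ k + q k) := by
    intro j
    induction j with
    | zero => simp [hm0]
    | succ j ih =>
      have hle : m j ≤ m (j + 1) := (hm (Nat.lt_succ_self j)).le
      have hsplit : ∀ g : ℕ → ℝ, ∑ k ∈ Finset.Icc 1 (m (j + 1)), g k =
          ∑ k ∈ Finset.Icc 1 (m j), g k +
          ∑ k ∈ Finset.Icc (m j + 1) (m (j + 1)), g k := by
        intro g
        rw [← hIoc 0 (m (j + 1)), ← hIoc 0 (m j), ← hIoc (m j) (m (j + 1)),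
          Finset.sum_Ioc_consecutive g (Nat.zero_le _) hle]
      rw [hsplit f, hsplit (fun k => δ k + q k)]
      exact add_le_add ih (hwin j).2
  -- main partial sum bound
  have hpart : ∀ n : ℕ, ∑ k ∈ Finset.Icc 1 n, f k ≤ M := by
    intro n
    have hn : n ≤ m n := hm.le_apply
    calc ∑ k ∈ Finset.Icc 1 n, f k
        ≤ ∑ k ∈ Finset.Icc 1 (m n), f k := by
          apply Finset.sum_le_sum_of_subset_of_nonneg
          · exact Finset.Icc_subset_Icc le_rfl hn
          · intro k _ _; exact hf0 k
      _ ≤ ∑ k ∈ Finset.Icc 1 (m n), (δ k + q k) := hmj n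
      _ ≤ M := hdq (m n)
  -- summability ⇒ f → 0
  have hsum : Summable f := by
    apply summable_of_sum_range_le (c := f 0 + M) hf0
    intro n
    cases n with
    | zero => have := hf0 0; simp; linarith
    | succ n =>
      rw [Finset.range_eq_Ico, Finset.Ico_add_one_right_eq_Icc,
        Finset.Icc_eq_cons_Ioc (Nat.zero_le _), Finset.sum_cons, hIoc 0 n]
      exact add_le_add le_rfl (hpart n)
  have hf_tendsto : Tendsto f atTop (nhds 0) := hsum.tendsto_atTop_zero
  have hsq : Tendsto (fun k => ‖e k‖ ^ 2) atTop (nhds 0) := by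
    have hub : Tendsto (fun k => f k / ψ) atTop (nhds 0) := by
      simpa using hf_tendsto.div_const ψ
    refine squeeze_zero (fun k => sq_nonneg _) (fun k => ?_) hub
    rw [le_div_iff₀ hψ]
    calc ‖e k‖ ^ 2 * ψ = ψ * ‖e k‖ ^ 2 := mul_comm _ _
      _ ≤ Ψ k * ‖e k‖ ^ 2 := mul_le_mul_of_nonneg_right (hΨ k) (sq_nonneg _)
  have hnorm : Tendsto (fun k => ‖e k‖) atTop (nhds 0) := by
    have h2 := (Real.continuous_sqrt.tendsto 0).comp hsq
    simpa [Function.comp_def, Real.sqrt_sq (norm_nonneg _)] using h2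
  have he0 : Tendsto e atTop (nhds 0) := tendsto_zero_iff_norm_tendsto_zero.mpr hnorm
  refine ⟨hpart, he0, ?_⟩
  intro ε hε
  obtain ⟨N, hN⟩ := (Metric.tendsto_atTop.mp he0) ε hε
  refine ⟨N, fun k hk => ?_⟩
  have hk' : ‖e k‖ < ε := by simpa [dist_eq_norm] using hN k hk
  constructor
  · intro hσ; have hek := he k; rw [if_neg hσ] at hek; rwa [← hek]
  · intro hσ; have hek := he k; rw [if_pos hσ] at hek; rwa [← hek]
end

section
/- Let ι be an index type with distinct elements i, j ∈ ι, and let B_i, B_j ⊆ ι be finite sets (neighbor sets) with i ∉ B_i and j ∉ B_j. Let V_i, V_j ⊆ ℝ² be measurable sets, let R, p_l : ℝ² → ℝ (for l ∈ ι) be measurable, and let φ : ℝ² → ℝ² be measurable. Assume: (a) φ(x) = 0 for every x ∉ V_i; (b) p_l(x) = 0 for every x ∈ V_i ∩ V_j and every l ∈ B_j with l ≠ i and l ∉ B_i ∩ B_j; and (c) the integrand below is integrable on V_j with respect to Lebesgue measure. Then ∫_{V_j} R(x)·p_j(x)·(∏_{l ∈ B_j \ {i}} (1 − p_l(x)))·φ(x)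 dx = ∫_{V_i ∩ V_j} R(x)·p_j(x)·(∏_{l ∈ B_i ∩ B_j} (1 − p_l(x)))·φ(x) dx. (Lemma 7 of the paper: the cross-gradient d_{ij} = ∂H_j(s̄_j)/∂s_i of the coverage objective can be computed locally by agent i.) -/
open MeasureTheory Finset
set_option maxHeartbeats 1000000

/-- Lemma 7 of the paper: the cross-gradient `d_{ij} = ∂H_j(s̄_j)/∂s_i` of the
coverage objective can be computed locally by agent `i`. -/
theorem cross_gradient_local {ι : Type*} [DecidableEq ι] (i j : ι) (hij : i ≠ j)
    (Bi Bj : Finset ι) (hiBi : i ∉ Bi) (hjBj : j ∉ Bj)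
    (Vi Vj : Set (EuclideanSpace ℝ (Fin 2)))
    (hVi : MeasurableSet Vi) (hVj : MeasurableSet Vj)
    (R : EuclideanSpace ℝ (Fin 2) → ℝ) (hR : Measurable R)
    (p : ι → EuclideanSpace ℝ (Fin 2) → ℝ) (hp : ∀ l, Measurable (p l))
    (φ : EuclideanSpace ℝ (Fin 2) → EuclideanSpace ℝ (Fin 2)) (hφ : Measurable φ)
    (hφ0 : ∀ x ∉ Vi, φ x = 0)
    (hp0 : ∀ x ∈ Vi ∩ Vj, ∀ l ∈ Bj, l ≠ i → l ∉ Bi ∩ Bj → p l x = 0)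
    (hint : IntegrableOn
      (fun x => (R x * p j x * ∏ l ∈ Bj.erase i, (1 - p l x)) • φ x) Vj volume) :
    ∫ x in Vj, (R x * p j x * ∏ l ∈ Bj.erase i, (1 - p l x)) • φ x
      = ∫ x in Vi ∩ Vj, (R x * p j x * ∏ l ∈ Bi ∩ Bj, (1 - p l x)) • φ x := by

  set f : EuclideanSpace ℝ (Fin 2) → EuclideanSpace ℝ (Fin 2) :=
    fun x => (R x * p j x * ∏ l ∈ Bj.erase i, (1 - p l x)) • φ x with hf
  have hzero : ∀ x ∈ Vj \ (Vi ∩ Vj), f x = 0 := by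
    intro x hx
    have : x ∉ Vi := fun h => hx.2 ⟨h, hx.1⟩
    simp [hf, hφ0 x this]
  have h1 : ∫ x in Vj, f x = ∫ x in Vi ∩ Vj, f x :=
    setIntegral_eq_of_subset_of_forall_diff_eq_zero hVj Set.inter_subset_right hzero
  rw [h1]
  refine setIntegral_congr_fun (hVi.inter hVj) (fun x hx => ?_)
  have hprod : ∏ l ∈ Bj.erase i, (1 - p l x) = ∏ l ∈ Bi ∩ Bj, (1 - p l x) := by
    refine (Finset.prod_subset ?_ ?_).symm
    · intro l hl
      rcases Finset.mem_inter.mp hl with ⟨hlBi, hlBj⟩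
      exact Finset.mem_erase.mpr ⟨fun h => hiBi (h ▸ hlBi), hlBj⟩
    · intro l hl hl'
      rcases Finset.mem_erase.mp hl with ⟨hli, hlBj⟩
      rw [hp0 x hx l hlBj hli hl', sub_zero]
  simp only [hf, hprod]
end

section
/- Let ι be an index type, 𝒱 ⊆ ι a finite set of agents with i ∈ 𝒱, and B̄_i ⊆ 𝒱 with i ∈ B̄_i; write B_i = B̄_i \ {i}. Let F ⊆ ℝ² be measurable, V_i ⊆ F measurable, let R : ℝ² → ℝ be measurable, and for each l ∈ 𝒱 let p̂_l : ℝ² → ℝ be measurable. Assume: (a) p̂_i(x) = 0 for every x ∉ V_i; (b) p̂_l(x) = 0 for every x ∈ V_i and every l ∈ 𝒱 \ B̄_i; and (c) the integrands below are integrable on F with respect to Lebesgue measure. Then ∫_F R(x)·(1 − ∏_{l ∈ 𝒱} (1 − p̂_l(x))) dx = ∫_{V_i} R(x)·(∏_{l ∈ B_i} (1 − p̂_l(x)))·p̂_i(x) dx + ∫_F R(x)·(1 − ∏_{l ∈ 𝒱 \ {i}} (1 − p̂_l(x))) dx. (The separability decomposition H(s) = H_i(s̄_i) + H_i^c(s_i^c)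 of the coverage objective, equations (31)–(33) of the paper.) -/
open MeasureTheory Finset

/-- The separability decomposition `H(s) = H_i(s̄_i) + H_i^c(s_i^c)` of the
coverage objective, equations (31)–(33) of the paper. -/
theorem coverage_objective_separable {ι : Type*} [DecidableEq ι]
    (𝒱 : Finset ι) (i : ι) (hi : i ∈ 𝒱)
    (Bbar : Finset ι) (hBsub : Bbar ⊆ 𝒱) (hiB : i ∈ Bbar)
    (F Vi : Set (EuclideanSpace ℝ (Fin 2))) (hViF : Vi ⊆ F)
    (hF : MeasurableSet F) (hVi : MeasurableSet Vi)
    (R : EuclideanSpace ℝ (Fin 2) → ℝ) (hR : Measurable R)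
    (phat : ι → EuclideanSpace ℝ (Fin 2) → ℝ) (hphat : ∀ l, Measurable (phat l))
    (hpi0 : ∀ x ∉ Vi, phat i x = 0)
    (hnonnbr : ∀ x ∈ Vi, ∀ l ∈ 𝒱, l ∉ Bbar → phat l x = 0)
    (hint1 : IntegrableOn
      (fun x => R x * (1 - ∏ l ∈ 𝒱, (1 - phat l x))) F volume)
    (hint2 : IntegrableOn
      (fun x => R x * (∏ l ∈ Bbar.erase i, (1 - phat l x)) * phat i x) Vi volume)
    (hint3 : IntegrableOn
      (fun x => R x * (1 - ∏ l ∈ 𝒱.erase i, (1 - phat l x))) F volume) :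
    ∫ x in F, R x * (1 - ∏ l ∈ 𝒱, (1 - phat l x))
      = (∫ x in Vi, R x * (∏ l ∈ Bbar.erase i, (1 - phat l x)) * phat i x)
        + ∫ x in F, R x * (1 - ∏ l ∈ 𝒱.erase i, (1 - phat l x)) := by
  set g : EuclideanSpace ℝ (Fin 2) → ℝ :=
    fun x => R x * (∏ l ∈ Bbar.erase i, (1 - phat l x)) * phat i x with hg
  -- pointwise identity
  have hpt : ∀ x, R x * (1 - ∏ l ∈ 𝒱, (1 - phat l x))
      = Vi.indicator g x + R x * (1 - ∏ l ∈ 𝒱.erase i, (1 - phat l x)) := by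
    intro x
    by_cases hx : x ∈ Vi
    · rw [Set.indicator_of_mem hx]
      have hprod : ∏ l ∈ 𝒱.erase i, (1 - phat l x)
          = ∏ l ∈ Bbar.erase i, (1 - phat l x) := by
        refine (Finset.prod_subset (Finset.erase_subset_erase _ hBsub) ?_).symm
        intro l hl hlB
        have hl𝒱 : l ∈ 𝒱 := Finset.mem_of_mem_erase hl
        have hlne : l ≠ i := Finset.ne_of_mem_erase hl
        have : l ∉ Bbar := fun h => hlB (Finset.mem_erase.mpr ⟨hlne, h⟩)
        rw [hnonnbr x hx l hl𝒱 this]; ring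
      rw [← Finset.mul_prod_erase 𝒱 _ hi, hg, hprod]
      ring
    · rw [Set.indicator_of_notMem hx, ← Finset.mul_prod_erase 𝒱 _ hi, hpi0 x hx]
      ring
  have hgint : IntegrableOn (Vi.indicator g) F volume :=
    (hint2.integrable_indicator hVi).integrableOn
  calc ∫ x in F, R x * (1 - ∏ l ∈ 𝒱, (1 - phat l x))
      = ∫ x in F, (Vi.indicator g x + R x * (1 - ∏ l ∈ 𝒱.erase i, (1 - phat l x))) := by
        exact integral_congr_ae (Filter.Eventually.of_forall fun x => hpt x)
    _ = (∫ x in F, Vi.indicator g x)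
        + ∫ x in F, R x * (1 - ∏ l ∈ 𝒱.erase i, (1 - phat l x)) :=
        integral_add hgint hint3
    _ = (∫ x in Vi, g x)
        + ∫ x in F, R x * (1 - ∏ l ∈ 𝒱.erase i, (1 - phat l x)) := by
        rw [setIntegral_indicator hVi, Set.inter_eq_self_of_subset_right hViF]
end
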